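/- arXiv:1307.1437 — 2 statements merged into one kernel-verified Lean document; each statement's English description precedes it below -/
import Mathlib

section
/- For any three nonempty cones C₁, C₂, C₃ ⊆ ℝ^m (sets closed under multiplication by nonnegative scalars), the discrepancy satisfies the triangle inequality δ(C₁,C₃) ≤ δ(C₁,C₂) + δ(C₂,C₃). -/
/-- A cone: a set closed under multiplication by nonnegative scalars. -/
def IsCone {m : ℕ} (C : Set (EuclideanSpace ℝ (Fin m))) : Prop :=
  ∀ (t : ℝ), 0 ≤ t → ∀ x ∈ C, t • x ∈ C

/-- The discrepancy δ(C,Ĉ) between two cones: the Hausdorff-type maximum of the two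
one-sided deviations measured over unit-norm elements (suprema over empty sets are 0). -/
noncomputable def coneDisc {m : ℕ} (C Chat : Set (EuclideanSpace ℝ (Fin m))) : ℝ :=
  max (⨆ y : {y : EuclideanSpace ℝ (Fin m) // y ∈ C ∧ ‖y‖ = 1},
        Metric.infDist (y : EuclideanSpace ℝ (Fin m)) Chat)
      (⨆ y : {y : EuclideanSpace ℝ (Fin m) // y ∈ Chat ∧ ‖y‖ = 1},
        Metric.infDist (y : EuclideanSpace ℝ (Fin m)) C)

open Metric

lemma cone_zero_mem {m : ℕ} {C : Set (EuclideanSpace ℝ (Fin m))}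
    (h : IsCone C) (hne : C.Nonempty) : (0 : EuclideanSpace ℝ (Fin m)) ∈ C := by
  obtain ⟨x, hx⟩ := hne
  simpa using h 0 le_rfl x hx

lemma bdd_range {m : ℕ} (C D : Set (EuclideanSpace ℝ (Fin m)))
    (hD0 : (0 : EuclideanSpace ℝ (Fin m)) ∈ D) :
    BddAbove (Set.range fun y : {y : EuclideanSpace ℝ (Fin m) // y ∈ C ∧ ‖y‖ = 1} =>
      infDist (y : EuclideanSpace ℝ (Fin m)) D) := by
  refine ⟨1, ?_⟩
  rintro _ ⟨y, rfl⟩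
  calc infDist (y : EuclideanSpace ℝ (Fin m)) D ≤ dist (y : EuclideanSpace ℝ (Fin m)) 0 :=
        infDist_le_dist_of_mem hD0
    _ = 1 := by rw [dist_zero_right, y.2.2]

lemma sup_nonneg' {m : ℕ} (C D : Set (EuclideanSpace ℝ (Fin m))) :
    0 ≤ ⨆ y : {y : EuclideanSpace ℝ (Fin m) // y ∈ C ∧ ‖y‖ = 1},
      infDist (y : EuclideanSpace ℝ (Fin m)) D :=
  Real.iSup_nonneg fun _ => infDist_nonneg

lemma coneDisc_nonneg {m : ℕ} (C D : Set (EuclideanSpace ℝ (Fin m))) :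
    0 ≤ coneDisc C D :=
  le_max_of_le_left (sup_nonneg' C D)

lemma coneDisc_comm {m : ℕ} (C D : Set (EuclideanSpace ℝ (Fin m))) :
    coneDisc C D = coneDisc D C := max_comm _ _

lemma infDist_le_norm_mul {m : ℕ} {B C : Set (EuclideanSpace ℝ (Fin m))}
    (hB : IsCone B) (hC : IsCone C) (hCne : C.Nonempty)
    {z : EuclideanSpace ℝ (Fin m)} (hz : z ∈ B) :
    infDist z C ≤ ‖z‖ * ⨆ y : {y : EuclideanSpace ℝ (Fin m) // y ∈ B ∧ ‖y‖ = 1},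
      infDist (y : EuclideanSpace ℝ (Fin m)) C := by
  rcases eq_or_ne z 0 with rfl | hz0
  · rw [infDist_zero_of_mem (cone_zero_mem hC hCne)]
    simp
  · have hn : (0:ℝ) < ‖z‖ := norm_pos_iff.2 hz0
    set u : EuclideanSpace ℝ (Fin m) := ‖z‖⁻¹ • z with hu_def
    have hu : u ∈ B := hB _ (inv_nonneg.2 hn.le) z hz
    have hun : ‖u‖ = 1 := by
      rw [hu_def, norm_smul, norm_inv, norm_norm, inv_mul_cancel₀ hn.ne']
    have hz_eq : z = ‖z‖ • u := by
      rw [hu_def, smul_smul, mul_inv_cancel₀ hn.ne', one_smul]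
    have h1 : infDist z C ≤ ‖z‖ * infDist u C := by
      refine le_of_forall_pos_le_add fun ε hε => ?_
      have hlt : infDist u C < infDist u C + ε / ‖z‖ :=
        lt_add_of_pos_right _ (div_pos hε hn)
      obtain ⟨w, hw, hdw⟩ := (infDist_lt_iff hCne).1 hlt
      have hmem : ‖z‖ • w ∈ C := hC _ hn.le w hw
      calc infDist z C ≤ dist z (‖z‖ • w) := infDist_le_dist_of_mem hmem
        _ = ‖z‖ * dist u w := by
            rw [dist_eq_norm, dist_eq_norm]
            nth_rewrite 1 [hz_eq]
            rw [← smul_sub, norm_smul, Real.norm_eq_abs, abs_of_pos hn]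
        _ ≤ ‖z‖ * (infDist u C + ε / ‖z‖) := mul_le_mul_of_nonneg_left hdw.le hn.le
        _ = ‖z‖ * infDist u C + ε := by field_simp
    refine h1.trans (mul_le_mul_of_nonneg_left ?_ hn.le)
    exact le_ciSup (bdd_range B C (cone_zero_mem hC hCne)) ⟨u, hu, hun⟩

lemma exists_proj {m : ℕ} {B : Set (EuclideanSpace ℝ (Fin m))} (hB : IsCone B)
    (hB0 : (0 : EuclideanSpace ℝ (Fin m)) ∈ B) {y z : EuclideanSpace ℝ (Fin m)}
    (hy : ‖y‖ = 1) (hz : z ∈ B) :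
    ∃ z' ∈ B, ‖z'‖ ≤ 1 ∧ dist y z' ≤ dist y z := by
  rcases eq_or_ne z 0 with rfl | hz0
  · exact ⟨0, hB0, by simp, le_rfl⟩
  · have hn : (0:ℝ) < ‖z‖ := norm_pos_iff.2 hz0
    set a : ℝ := inner ℝ y z with ha_def
    set t : ℝ := max a 0 / ‖z‖ ^ 2 with ht_def
    have ht0 : 0 ≤ t := div_nonneg (le_max_right _ _) (sq_nonneg _)
    have hCS : a ≤ ‖z‖ := by
      calc a ≤ ‖y‖ * ‖z‖ := real_inner_le_norm y z
        _ = ‖z‖ := by rw [hy, one_mul]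
    refine ⟨t • z, hB t ht0 z hz, ?_, ?_⟩
    · rw [norm_smul, Real.norm_eq_abs, abs_of_nonneg ht0, ht_def]
      rw [div_mul_eq_mul_div, div_le_one (by positivity)]
      calc max a 0 * ‖z‖ ≤ ‖z‖ * ‖z‖ :=
            mul_le_mul_of_nonneg_right (max_le hCS hn.le) hn.le
        _ = ‖z‖ ^ 2 := (sq ‖z‖).symm
    · rw [dist_eq_norm, dist_eq_norm]
      have e1 : ‖y - t • z‖ ^ 2 = 1 - 2 * (t * a) + t ^ 2 * ‖z‖ ^ 2 := by
        rw [norm_sub_sq_real, real_inner_smul_right, norm_smul, mul_pow,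
          Real.norm_eq_abs, sq_abs, hy, one_pow, ← ha_def]
      have e2 : ‖y - z‖ ^ 2 = 1 - 2 * a + ‖z‖ ^ 2 := by
        rw [norm_sub_sq_real, hy, one_pow, ← ha_def]
      have hsq : ‖y - t • z‖ ^ 2 ≤ ‖y - z‖ ^ 2 := by
        rw [e1, e2]
        rcases le_or_gt a 0 with hneg | hpos
        · have : t = 0 := by rw [ht_def, max_eq_right hneg, zero_div]
          rw [this]
          nlinarith [sq_nonneg ‖z‖]
        · have : t = a / ‖z‖ ^ 2 := by rw [ht_def, max_eq_left hpos.le]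
          rw [this]
          have hn2 : (0:ℝ) < ‖z‖ ^ 2 := by positivity
          have heq : 1 - 2 * (a / ‖z‖ ^ 2 * a) + (a / ‖z‖ ^ 2) ^ 2 * ‖z‖ ^ 2
              = 1 - a ^ 2 / ‖z‖ ^ 2 := by
            field_simp
            ring
          rw [heq]
          have h5 : (2 * a - ‖z‖ ^ 2) * ‖z‖ ^ 2 ≤ a ^ 2 := by
            nlinarith [sq_nonneg (‖z‖ ^ 2 - a)]
          have h6 : 2 * a - ‖z‖ ^ 2 ≤ a ^ 2 / ‖z‖ ^ 2 := (le_div_iff₀ hn2).2 h5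
          linarith
      nlinarith [norm_nonneg (y - t • z), norm_nonneg (y - z)]

lemma oneside {m : ℕ} (A B C : Set (EuclideanSpace ℝ (Fin m)))
    (hBne : B.Nonempty) (hCne : C.Nonempty)
    (hA : IsCone A) (hB : IsCone B) (hC : IsCone C) :
    (⨆ y : {y : EuclideanSpace ℝ (Fin m) // y ∈ A ∧ ‖y‖ = 1},
      infDist (y : EuclideanSpace ℝ (Fin m)) C) ≤ coneDisc A B + coneDisc B C := by
  refine Real.iSup_le (fun y => ?_) (add_nonneg (coneDisc_nonneg A B) (coneDisc_nonneg B C))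
  refine le_of_forall_pos_le_add fun ε hε => ?_
  have hlt : infDist (y : EuclideanSpace ℝ (Fin m)) B < infDist (y : EuclideanSpace ℝ (Fin m)) B + ε :=
    lt_add_of_pos_right _ hε
  obtain ⟨z, hzB, hdz⟩ := (infDist_lt_iff hBne).1 hlt
  obtain ⟨z', hz'B, hz'n, hz'd⟩ := exists_proj hB (cone_zero_mem hB hBne) y.2.2 hzB
  have h1 : infDist (y : EuclideanSpace ℝ (Fin m)) C ≤ infDist z' C + dist (y : EuclideanSpace ℝ (Fin m)) z' :=
    infDist_le_infDist_add_dist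
  have h2 : infDist z' C ≤ ‖z'‖ * ⨆ w : {w : EuclideanSpace ℝ (Fin m) // w ∈ B ∧ ‖w‖ = 1},
      infDist (w : EuclideanSpace ℝ (Fin m)) C := infDist_le_norm_mul hB hC hCne hz'B
  have hsBC : (⨆ w : {w : EuclideanSpace ℝ (Fin m) // w ∈ B ∧ ‖w‖ = 1},
      infDist (w : EuclideanSpace ℝ (Fin m)) C) ≤ coneDisc B C := le_max_left _ _
  have h3 : infDist z' C ≤ coneDisc B C := by
    calc infDist z' C ≤ ‖z'‖ * ⨆ w : {w : EuclideanSpace ℝ (Fin m) // w ∈ B ∧ ‖w‖ = 1},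
        infDist (w : EuclideanSpace ℝ (Fin m)) C := h2
      _ ≤ 1 * ⨆ w : {w : EuclideanSpace ℝ (Fin m) // w ∈ B ∧ ‖w‖ = 1},
        infDist (w : EuclideanSpace ℝ (Fin m)) C :=
          mul_le_mul_of_nonneg_right hz'n (sup_nonneg' B C)
      _ ≤ coneDisc B C := by rw [one_mul]; exact hsBC
  have h4 : dist (y : EuclideanSpace ℝ (Fin m)) z' ≤ coneDisc A B + ε := by
    calc dist (y : EuclideanSpace ℝ (Fin m)) z' ≤ dist (y : EuclideanSpace ℝ (Fin m)) z := hz'd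
      _ ≤ infDist (y : EuclideanSpace ℝ (Fin m)) B + ε := hdz.le
      _ ≤ (⨆ w : {w : EuclideanSpace ℝ (Fin m) // w ∈ A ∧ ‖w‖ = 1},
          infDist (w : EuclideanSpace ℝ (Fin m)) B) + ε := by
            exact add_le_add_left (le_ciSup (bdd_range A B (cone_zero_mem hB hBne)) y) _
      _ ≤ coneDisc A B + ε := add_le_add_left (le_max_left _ _) _
  calc infDist (y : EuclideanSpace ℝ (Fin m)) C
      ≤ infDist z' C + dist (y : EuclideanSpace ℝ (Fin m)) z' := h1
    _ ≤ coneDisc B C + (coneDisc A B + ε) := add_le_add h3 h4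
    _ = coneDisc A B + coneDisc B C + ε := by ring

theorem stmt1 {m : ℕ} (C₁ C₂ C₃ : Set (EuclideanSpace ℝ (Fin m)))
    (h₁ne : C₁.Nonempty) (h₂ne : C₂.Nonempty) (h₃ne : C₃.Nonempty)
    (h₁ : IsCone C₁) (h₂ : IsCone C₂) (h₃ : IsCone C₃) :
    coneDisc C₁ C₃ ≤ coneDisc C₁ C₂ + coneDisc C₂ C₃ := by
  rw [coneDisc]
  refine max_le ?_ ?_
  · exact oneside C₁ C₂ C₃ h₂ne h₃ne h₁ h₂ h₃
  · have := oneside C₃ C₂ C₁ h₂ne h₁ne h₃ h₂ h₁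
    rwa [coneDisc_comm C₃ C₂, coneDisc_comm C₂ C₁, add_comm] at this
end

section
/- Let σ be a finite Borel measure on the unit sphere S² ⊆ ℝ³ with σ(S²) > 0, let ȳ : S² → ℝ^m be continuous with all entries nonnegative, and let α > 0. Set y_a = (1/σ(S²)) ∫_{S²} ȳ(u) dσ(u), assume y_a ≠ 0, and set y̆(u) = ȳ(u) + α·y_a (so every y̆(u) is nonzero with nonnegative entries). Let C̆ be the conic hull of { y̆(u) : u ∈ S² }, let u₁, …, u_N ∈ S², and let C̄ be the conic hull of { y̆(u₁), …, y̆(u_N), y_a }. Define η⋆ = sup_{w ∈ ℝ^m, ‖w‖₂ ≤ 1} inf_{u ∈ S²} ⟨w, y̆(u)/‖y̆(u)‖₂⟩. Suppose ε ≥ 0 is such that for every u ∈ S² there exists i with ‖ȳ(u) − ȳ(uᵢ)‖₂ ≤ ε. Then δ(C̆, C̄) ≤ 2ε / (η⋆ · α · ‖y_a‖₂). -/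
open MeasureTheory
open scoped RealInnerProductSpace

/-- The unit sphere S² in ℝ³, as a subtype. -/
abbrev Sphere2 : Type := Metric.sphere (0 : EuclideanSpace ℝ (Fin 3)) 1

/-- The conic hull of a set `A`: all finite nonnegative combinations of elements of `A`. -/
def conicHull {m : ℕ} (A : Set (EuclideanSpace ℝ (Fin m))) : Set (EuclideanSpace ℝ (Fin m)) :=
  {y | ∃ (k : ℕ) (c : Fin k → ℝ) (a : Fin k → EuclideanSpace ℝ (Fin m)),
      (∀ i, 0 ≤ c i) ∧ (∀ i, a i ∈ A) ∧ y = ∑ i, c i • a i}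

/-- η⋆ = sup over ‖w‖ ≤ 1 of inf over u ∈ S² of ⟨w, y̆(u)/‖y̆(u)‖⟩. -/
noncomputable def etaStar {m : ℕ} (yb : Sphere2 → EuclideanSpace ℝ (Fin m)) : ℝ :=
  ⨆ w : {w : EuclideanSpace ℝ (Fin m) // ‖w‖ ≤ 1},
    ⨅ u : Sphere2, (inner ℝ (w : EuclideanSpace ℝ (Fin m)) (‖yb u‖⁻¹ • yb u) : ℝ)

section Aux

variable {m : ℕ}

lemma mem_conicHull_self {A : Set (EuclideanSpace ℝ (Fin m))} {x} (hx : x ∈ A) :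
    x ∈ conicHull A :=
  ⟨1, fun _ => 1, fun _ => x, fun _ => zero_le_one, fun _ => hx, by simp⟩

lemma zero_mem_conicHull (A : Set (EuclideanSpace ℝ (Fin m))) : (0 : EuclideanSpace ℝ (Fin m)) ∈ conicHull A :=
  ⟨0, fun i => i.elim0, fun i => i.elim0, fun i => i.elim0, fun i => i.elim0, by simp⟩

lemma conicHull_add {A : Set (EuclideanSpace ℝ (Fin m))} {x y}
    (hx : x ∈ conicHull A) (hy : y ∈ conicHull A) : x + y ∈ conicHull A := by
  obtain ⟨k1, c1, a1, h1, h1', rfl⟩ := hx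
  obtain ⟨k2, c2, a2, h2, h2', rfl⟩ := hy
  refine ⟨k1 + k2, Fin.addCases c1 c2, Fin.addCases a1 a2, ?_, ?_, ?_⟩
  · intro i; induction i using Fin.addCases <;> simp [*]
  · intro i; induction i using Fin.addCases <;> simp [*]
  · rw [Fin.sum_univ_add]; simp

lemma conicHull_smul {A : Set (EuclideanSpace ℝ (Fin m))} {x} {t : ℝ}
    (ht : 0 ≤ t) (hx : x ∈ conicHull A) : t • x ∈ conicHull A := by
  obtain ⟨k, c, a, h1, h2, rfl⟩ := hx
  exact ⟨k, fun i => t * c i, a, fun i => mul_nonneg ht (h1 i), h2, by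
    rw [Finset.smul_sum]; simp [smul_smul]⟩

lemma convex_conicHull (A : Set (EuclideanSpace ℝ (Fin m))) : Convex ℝ (conicHull A) := by
  intro x hx y hy s t hs ht _
  exact conicHull_add (conicHull_smul hs hx) (conicHull_smul ht hy)

/-- For entrywise-nonnegative vectors, the norm of a part is at most the norm of the sum. -/
lemma norm_le_norm_add_of_nonneg {x z : EuclideanSpace ℝ (Fin m)}
    (hx : ∀ i, 0 ≤ x i) (hz : ∀ i, 0 ≤ z i) : ‖z‖ ≤ ‖x + z‖ := by
  rw [EuclideanSpace.norm_eq, EuclideanSpace.norm_eq]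
  apply Real.sqrt_le_sqrt
  apply Finset.sum_le_sum
  intro i _
  have : (x + z) i = x i + z i := rfl
  rw [this, Real.norm_eq_abs, Real.norm_eq_abs, abs_of_nonneg (hz i),
    abs_of_nonneg (add_nonneg (hx i) (hz i))]
  have h0 : z i ≤ x i + z i := le_add_of_nonneg_left (hx i)
  exact pow_le_pow_left₀ (hz i) h0 2

/-- For an entrywise-nonnegative vector, the coordinate sum dominates the Euclidean norm. -/
lemma norm_le_sum_of_nonneg {z : EuclideanSpace ℝ (Fin m)}
    (hz : ∀ i, 0 ≤ z i) : ‖z‖ ≤ ∑ i, z i := by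
  rw [EuclideanSpace.norm_eq]
  have h1 : ∑ i, ‖z i‖ ^ 2 ≤ (∑ i, z i) ^ 2 := by
    rw [sq (∑ i, z i), Finset.sum_mul_sum]
    calc ∑ i, ‖z i‖ ^ 2 = ∑ i, z i * z i := by
          refine Finset.sum_congr rfl fun i _ => ?_
          rw [Real.norm_eq_abs, sq_abs, sq]
      _ ≤ ∑ i, ∑ j, z i * z j := by
          refine Finset.sum_le_sum fun i _ => ?_
          have := Finset.single_le_sum (f := fun j => z i * z j)
            (fun j _ => mul_nonneg (hz i) (hz j)) (Finset.mem_univ i)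
          exact this
  calc √(∑ i, ‖z i‖ ^ 2) ≤ √((∑ i, z i) ^ 2) := Real.sqrt_le_sqrt h1
    _ = ∑ i, z i := Real.sqrt_sq (Finset.sum_nonneg fun i _ => hz i)

end Aux

theorem stmt5 {m N : ℕ} (σ : Measure Sphere2) [IsFiniteMeasure σ]
    (hσpos : 0 < σ Set.univ)
    (ybar : Sphere2 → EuclideanSpace ℝ (Fin m)) (hy : Continuous ybar)
    (hnn : ∀ (u : Sphere2) (i : Fin m), 0 ≤ ybar u i)
    (α : ℝ) (hα : 0 < α)
    (ya : EuclideanSpace ℝ (Fin m))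
    (hya : ya = (σ Set.univ).toReal⁻¹ • ∫ u, ybar u ∂σ)
    (hya0 : ya ≠ 0)
    (u : Fin N → Sphere2) (ε : ℝ) (hε : 0 ≤ ε)
    (hcover : ∀ v : Sphere2, ∃ i, ‖ybar v - ybar (u i)‖ ≤ ε) :
    coneDisc (conicHull (Set.range fun v => ybar v + α • ya))
        (conicHull (insert ya (Set.range fun i => ybar (u i) + α • ya)))
      ≤ 2 * ε / (etaStar (fun v => ybar v + α • ya) * α * ‖ya‖) := by
  classical
  have hSne : Nonempty Sphere2 := by
    rw [nonempty_subtype]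
    exact NormedSpace.sphere_nonempty.mpr zero_le_one
  set yb : Sphere2 → EuclideanSpace ℝ (Fin m) := fun v => ybar v + α • ya with hyb
  have hya_pos : (0:ℝ) < ‖ya‖ := norm_pos_iff.mpr hya0
  have hσfin : σ Set.univ ≠ ⊤ := measure_ne_top σ _
  have hσt : 0 < (σ Set.univ).toReal := ENNReal.toReal_pos hσpos.ne' hσfin
  -- integrability
  have hint : Integrable ybar σ := by
    rw [← MeasureTheory.integrableOn_univ]
    exact hy.continuousOn.integrableOn_compact isCompact_univ
  -- nonnegativity of ya
  have hya_nn : ∀ i, 0 ≤ ya i := by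
    intro i
    rw [hya]
    have hcoord : (∫ v, ybar v ∂σ) i = ∫ v, ybar v i ∂σ := by
      have := (EuclideanSpace.proj (𝕜 := ℝ) i).integral_comp_comm hint
      simpa using this.symm
    have : ((σ Set.univ).toReal⁻¹ • ∫ v, ybar v ∂σ) i
        = (σ Set.univ).toReal⁻¹ * (∫ v, ybar v ∂σ) i := rfl
    rw [this, hcoord]
    exact mul_nonneg (inv_nonneg.mpr hσt.le) (integral_nonneg fun v => hnn v i)
  have hyb_nn : ∀ v i, 0 ≤ yb v i := by
    intro v i
    have : yb v i = ybar v i + α * ya i := rfl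
    rw [this]
    exact add_nonneg (hnn v i) (mul_nonneg hα.le (hya_nn i))
  have hαya_nn : ∀ i, 0 ≤ (α • ya : EuclideanSpace ℝ (Fin m)) i :=
    fun i => mul_nonneg hα.le (hya_nn i)
  have hyb_norm : ∀ v, α * ‖ya‖ ≤ ‖yb v‖ := by
    intro v
    have h1 : ‖(α • ya : EuclideanSpace ℝ (Fin m))‖ ≤ ‖ybar v + α • ya‖ :=
      norm_le_norm_add_of_nonneg (hnn v) hαya_nn
    calc α * ‖ya‖ = ‖(α • ya : EuclideanSpace ℝ (Fin m))‖ := by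
          rw [norm_smul, Real.norm_eq_abs, abs_of_pos hα]
      _ ≤ ‖yb v‖ := h1
  have hyb_pos : ∀ v, (0:ℝ) < ‖yb v‖ :=
    fun v => lt_of_lt_of_le (mul_pos hα hya_pos) (hyb_norm v)
  -- unit vectors
  set q : Sphere2 → EuclideanSpace ℝ (Fin m) := fun v => ‖yb v‖⁻¹ • yb v with hq
  have hq_norm : ∀ v, ‖q v‖ = 1 := by
    intro v
    rw [hq]
    simp only [norm_smul, Real.norm_eq_abs, abs_of_pos (inv_pos.mpr (hyb_pos v))]
    exact inv_mul_cancel₀ (hyb_pos v).ne'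
  have hq_nn : ∀ v i, 0 ≤ q v i := by
    intro v i
    exact mul_nonneg (inv_nonneg.mpr (hyb_pos v).le) (hyb_nn v i)
  -- the index type for etaStar
  have hball : Nonempty {w : EuclideanSpace ℝ (Fin m) // ‖w‖ ≤ 1} :=
    ⟨⟨0, by simp⟩⟩
  -- inner products with unit vectors are in [-1, 1] for ‖w‖ ≤ 1
  have hinner_bdd : ∀ (w : EuclideanSpace ℝ (Fin m)), ‖w‖ ≤ 1 → ∀ v : Sphere2,
      |(inner ℝ w (q v) : ℝ)| ≤ 1 := by
    intro w hw v
    calc |(inner ℝ w (q v) : ℝ)| ≤ ‖w‖ * ‖q v‖ := abs_real_inner_le_norm w (q v)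
      _ ≤ 1 := by rw [hq_norm v]; simpa using hw
  have hbddBelow : ∀ (w : {w : EuclideanSpace ℝ (Fin m) // ‖w‖ ≤ 1}),
      BddBelow (Set.range fun v : Sphere2 => (inner ℝ (w : EuclideanSpace ℝ (Fin m)) (q v) : ℝ)) := by
    intro w
    refine ⟨-1, ?_⟩
    rintro x ⟨v, rfl⟩
    exact neg_le_of_abs_le (hinner_bdd w w.2 v)
  have hbddAbove : BddAbove (Set.range fun w : {w : EuclideanSpace ℝ (Fin m) // ‖w‖ ≤ 1} =>
      ⨅ v : Sphere2, (inner ℝ (w : EuclideanSpace ℝ (Fin m)) (q v) : ℝ)) := by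
    refine ⟨1, ?_⟩
    rintro x ⟨w, rfl⟩
    obtain ⟨v⟩ := hSne
    exact le_trans (ciInf_le (hbddBelow w) v) (le_of_abs_le (hinner_bdd w w.2 v))
  -- m > 0
  have hm : 0 < m := by
    rcases Nat.eq_zero_or_pos m with h | h
    · exfalso; apply hya0
      subst h
      exact Subsingleton.elim ya 0
    · exact h
  -- etaStar is positive
  have hsqm : (0:ℝ) < √m := Real.sqrt_pos.mpr (by exact_mod_cast hm)
  set w₀ : EuclideanSpace ℝ (Fin m) := WithLp.toLp 2 (fun _ => (√m)⁻¹) with hw₀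
  have hw₀_norm : ‖w₀‖ = 1 := by
    rw [EuclideanSpace.norm_eq]
    have : ∀ i : Fin m, ‖w₀ i‖ ^ 2 = (m:ℝ)⁻¹ := by
      intro i
      rw [hw₀]
      simp only [PiLp.toLp_apply, Real.norm_eq_abs, sq_abs]
      rw [inv_pow, Real.sq_sqrt (by positivity : (0:ℝ) ≤ m)]
    rw [Finset.sum_congr rfl fun i _ => this i]
    simp only [Finset.sum_const, Finset.card_univ, Fintype.card_fin, nsmul_eq_mul]
    rw [mul_inv_cancel₀ (by exact_mod_cast hm.ne' : (m:ℝ) ≠ 0)]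
    exact Real.sqrt_one
  have hw₀_inner : ∀ v : Sphere2, (√m)⁻¹ ≤ (inner ℝ w₀ (q v) : ℝ) := by
    intro v
    have hinner : (inner ℝ w₀ (q v) : ℝ) = ∑ i, w₀ i * q v i := by
      rw [PiLp.inner_apply]; simp only [Real.inner_apply]
    rw [hinner]
    have : ∑ i, w₀ i * q v i = (√m)⁻¹ * ∑ i, q v i := by
      rw [Finset.mul_sum]
    rw [this]
    have h1 : (1:ℝ) ≤ ∑ i, q v i := by
      calc (1:ℝ) = ‖q v‖ := (hq_norm v).symm
        _ ≤ ∑ i, q v i := norm_le_sum_of_nonneg (hq_nn v)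
    calc (√m)⁻¹ = (√m)⁻¹ * 1 := by ring
      _ ≤ (√m)⁻¹ * ∑ i, q v i := by
          exact mul_le_mul_of_nonneg_left h1 (inv_nonneg.mpr hsqm.le)
  have heta_pos : 0 < etaStar yb := by
    have h1 : (√m)⁻¹ ≤ ⨅ v : Sphere2, (inner ℝ w₀ (q v) : ℝ) :=
      le_ciInf hw₀_inner
    have h2 : (⨅ v : Sphere2, (inner ℝ w₀ (q v) : ℝ)) ≤ etaStar yb := by
      have := le_ciSup hbddAbove (⟨w₀, hw₀_norm.le⟩ : {w : EuclideanSpace ℝ (Fin m) // ‖w‖ ≤ 1})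
      exact this
    calc (0:ℝ) < (√m)⁻¹ := inv_pos.mpr hsqm
      _ ≤ ⨅ v : Sphere2, (inner ℝ w₀ (q v) : ℝ) := h1
      _ ≤ etaStar yb := h2
  have hdenom_pos : 0 < etaStar yb * α * ‖ya‖ :=
    mul_pos (mul_pos heta_pos hα) hya_pos
  have hRHS_nonneg : 0 ≤ 2 * ε / (etaStar yb * α * ‖ya‖) := by positivity
  -- notation
  set Cb : Set (EuclideanSpace ℝ (Fin m)) := conicHull (Set.range yb) with hCb
  set Ch : Set (EuclideanSpace ℝ (Fin m)) :=
    conicHull (insert ya (Set.range fun i => yb (u i))) with hCh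
  rw [coneDisc]
  apply max_le
  -- FIRST DIRECTION: y ∈ Cb unit, dist to Ch
  · apply Real.iSup_le _ hRHS_nonneg
    rintro ⟨y, ⟨k, c, a, hc, ha, rfl⟩, hynorm⟩
    simp only
    -- choose generators
    choose v hv using fun j => ha j
    choose idx hidx using fun j => hcover (v j)
    set yhat : EuclideanSpace ℝ (Fin m) := ∑ j, c j • yb (u (idx j)) with hyhat
    have hyhat_mem : yhat ∈ Ch := by
      refine ⟨k, c, fun j => yb (u (idx j)), hc, fun j => ?_, rfl⟩
      exact Set.mem_insert_of_mem _ ⟨idx j, rfl⟩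
    set S : ℝ := ∑ j, c j with hS
    have hS_nonneg : 0 ≤ S := Finset.sum_nonneg fun j _ => hc j
    have hdist : ‖(∑ j, c j • a j) - yhat‖ ≤ ε * S := by
      rw [hyhat, ← Finset.sum_sub_distrib]
      calc ‖∑ j, (c j • a j - c j • yb (u (idx j)))‖
          ≤ ∑ j, ‖c j • a j - c j • yb (u (idx j))‖ := norm_sum_le _ _
        _ ≤ ∑ j, c j * ε := by
            refine Finset.sum_le_sum fun j _ => ?_
            rw [← smul_sub, norm_smul, Real.norm_eq_abs, abs_of_nonneg (hc j)]
            refine mul_le_mul_of_nonneg_left ?_ (hc j)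
            have : a j - yb (u (idx j)) = ybar (v j) - ybar (u (idx j)) := by
              rw [← hv j]
              show yb (v j) - yb (u (idx j)) = _
              simp only [hyb]
              abel
            rw [this]
            exact hidx j
        _ = ε * S := by rw [hS, Finset.mul_sum]; exact Finset.sum_congr rfl fun j _ => mul_comm _ _
    -- bound on S via etaStar
    have hSpos : S ≠ 0 → True := fun _ => trivial
    have hkey : etaStar yb * (S * (α * ‖ya‖)) ≤ 1 := by
      rcases eq_or_lt_of_le hS_nonneg with hS0 | hS0
      · rw [← hS0]; simp
      have hSinv_pos : 0 < (S * (α * ‖ya‖)) := by positivity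
      rw [← le_div_iff₀ hSinv_pos]
      apply Real.iSup_le _ (by positivity)
      rintro ⟨w, hw⟩
      simp only
      rcases le_or_gt (⨅ v : Sphere2, (inner ℝ w (q v) : ℝ)) 0 with hneg | hposw
      · exact le_trans hneg (by positivity)
      · rw [le_div_iff₀ hSinv_pos]
        set g : ℝ := ⨅ v : Sphere2, (inner ℝ w (q v) : ℝ) with hg
        have hgle : ∀ v : Sphere2, g ≤ (inner ℝ w (q v) : ℝ) :=
          fun v => ciInf_le (hbddBelow ⟨w, hw⟩) v
        have hterm : ∀ j, c j * (α * ‖ya‖) * g ≤ c j * (inner ℝ w (yb (v j)) : ℝ) := by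
          intro j
          have h1 : (α * ‖ya‖) * g ≤ ‖yb (v j)‖ * g :=
            mul_le_mul_of_nonneg_right (hyb_norm (v j)) hposw.le
          have h2 : ‖yb (v j)‖ * g ≤ ‖yb (v j)‖ * (inner ℝ w (q (v j)) : ℝ) :=
            mul_le_mul_of_nonneg_left (hgle (v j)) (hyb_pos (v j)).le
          have h3 : ‖yb (v j)‖ * (inner ℝ w (q (v j)) : ℝ) = (inner ℝ w (yb (v j)) : ℝ) := by
            rw [hq]
            simp only [inner_smul_right]
            rw [← mul_assoc, mul_inv_cancel₀ (hyb_pos (v j)).ne', one_mul]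
          calc c j * (α * ‖ya‖) * g = c j * ((α * ‖ya‖) * g) := by ring
            _ ≤ c j * ((inner ℝ w (yb (v j)) : ℝ)) := by
                refine mul_le_mul_of_nonneg_left ?_ (hc j)
                rw [← h3]; exact le_trans h1 h2
        have hsum : g * (S * (α * ‖ya‖)) ≤ (inner ℝ w (∑ j, c j • a j) : ℝ) := by
          rw [inner_sum]
          calc g * (S * (α * ‖ya‖)) = ∑ j, c j * (α * ‖ya‖) * g := by
                rw [hS, Finset.sum_mul]
                rw [Finset.mul_sum]
                refine Finset.sum_congr rfl fun j _ => by ring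
            _ ≤ ∑ j, c j * (inner ℝ w (yb (v j)) : ℝ) :=
                Finset.sum_le_sum fun j _ => hterm j
            _ = ∑ j, (inner ℝ w (c j • a j) : ℝ) := by
                refine Finset.sum_congr rfl fun j _ => ?_
                rw [inner_smul_right, hv j]
        have hCS : (inner ℝ w (∑ j, c j • a j) : ℝ) ≤ 1 := by
          calc (inner ℝ w (∑ j, c j • a j) : ℝ) ≤ ‖w‖ * ‖∑ j, c j • a j‖ :=
              real_inner_le_norm _ _
            _ ≤ 1 := by rw [hynorm]; simpa using hw
        exact le_trans hsum hCS
    have hSle : S ≤ 1 / (etaStar yb * α * ‖ya‖) := by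
      rw [le_div_iff₀ hdenom_pos]
      calc S * (etaStar yb * α * ‖ya‖) = etaStar yb * (S * (α * ‖ya‖)) := by ring
        _ ≤ 1 := hkey
    have h1 : Metric.infDist (∑ j, c j • a j) Ch ≤ ε * S :=
      le_trans (Metric.infDist_le_dist_of_mem hyhat_mem) (by rwa [dist_eq_norm])
    calc Metric.infDist (∑ j, c j • a j) Ch ≤ ε * S := h1
      _ ≤ ε * (1 / (etaStar yb * α * ‖ya‖)) := mul_le_mul_of_nonneg_left hSle hε
      _ ≤ 2 * ε / (etaStar yb * α * ‖ya‖) := by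
          rw [mul_one_div]
          gcongr
          linarith
  -- SECOND DIRECTION: y ∈ Ch unit, dist to Cb is zero
  · apply Real.iSup_le _ hRHS_nonneg
    rintro ⟨y, hy', hynorm⟩
    simp only
    -- y ∈ closure Cb
    have hya_cl : ya ∈ closure Cb := by
      -- average of yb
      have hintb : Integrable yb σ := by
        rw [← MeasureTheory.integrableOn_univ]
        exact ((hy.add continuous_const).continuousOn).integrableOn_compact isCompact_univ
      have hNZ : NeZero σ := ⟨by
        intro h
        rw [h] at hσpos
        simp at hσpos⟩
      have havg : ⨍ x, yb x ∂σ ∈ closure (convexHull ℝ (Set.range yb)) := by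
        refine Convex.average_mem ?_ isClosed_closure ?_ hintb
        · exact (convex_convexHull ℝ _).closure
        · exact Filter.Eventually.of_forall fun x =>
            subset_closure (subset_convexHull ℝ _ ⟨x, rfl⟩)
      have hsub : closure (convexHull ℝ (Set.range yb)) ⊆ closure Cb := by
        apply closure_mono
        exact convexHull_min (fun x hx => mem_conicHull_self hx) (convex_conicHull _)
      have havg' : ⨍ x, yb x ∂σ ∈ closure Cb := hsub havg
      -- compute the average
      have hval : ⨍ x, yb x ∂σ = (1 + α) • ya := by
        rw [average_eq]
        have : ∫ x, yb x ∂σ = (∫ x, ybar x ∂σ) + (σ Set.univ).toReal • (α • ya) := by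
          rw [hyb]
          rw [integral_add hint (integrable_const _), integral_const]; rfl
        rw [this, smul_add, measureReal_def, ← hya]
        rw [smul_smul, inv_mul_cancel₀ hσt.ne', one_smul]
        rw [add_smul, one_smul]
      have : ya = (1 + α)⁻¹ • ⨍ x, yb x ∂σ := by
        rw [hval, smul_smul, inv_mul_cancel₀ (by positivity : (1:ℝ) + α ≠ 0), one_smul]
      rw [this]
      exact map_mem_closure (continuous_const_smul _) havg'
        (fun x hx => conicHull_smul (by positivity) hx)
    have hycl : y ∈ closure Cb := by
      obtain ⟨k, c, a, hc, ha, rfl⟩ := hy'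
      apply Finset.sum_induction _ (fun z => z ∈ closure Cb)
      · intro a b hA hB
        exact map_mem_closure₂ continuous_add hA hB fun p hp q' hq' => conicHull_add hp hq'
      · exact subset_closure (zero_mem_conicHull _)
      · intro j _
        rcases ha j with h | ⟨i, hi⟩
        · rw [h]
          exact map_mem_closure (continuous_const_smul _) hya_cl
            (fun x hx => conicHull_smul (hc j) hx)
        · refine subset_closure ?_
          exact conicHull_smul (hc j) (mem_conicHull_self ⟨u i, hi⟩)
    rw [← Metric.infDist_closure]
    rw [Metric.infDist_zero_of_mem hycl]
    exact hRHS_nonneg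
end
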